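/- For positive semidefinite matrices A and B, defining the generalized geometric mean M(A,B) := √A·√(√(A⁺)·B·√(A⁺))·√A using the Moore–Penrose inverse A⁺, the kernel of M(A,B) equals the kernel of Π_A·Π_B·Π_A, where Π_A, Π_B are the projections onto the supports of A and B. -/

import Mathlib

open scoped ComplexOrder

open Classical in
/-- The unique positive semidefinite square root of a positive semidefinite matrix
(junk value 0 otherwise). -/
noncomputable def psqrt {n : Type*} [Fintype n] [DecidableEq n] (X : Matrix n n ℂ) :
    Matrix n n ℂ :=
  if h : X.PosSemidef then
    (h.1.eigenvectorUnitary : Matrix n n ℂ) *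
      Matrix.diagonal ((↑) ∘ (Real.sqrt ·) ∘ h.1.eigenvalues) *
      (star h.1.eigenvectorUnitary : Matrix n n ℂ)
  else 0

/-- The range (support) of a matrix, i.e. the orthogonal complement of its kernel. -/
noncomputable def msupp {n : Type*} [Fintype n] [DecidableEq n] (X : Matrix n n ℂ) :
    Submodule ℂ (EuclideanSpace ℂ n) :=
  (LinearMap.ker (Matrix.toEuclideanLin X))ᗮ

/-- The kernel of a matrix, as a subspace of Euclidean space. -/
noncomputable def mker {n : Type*} [Fintype n] [DecidableEq n] (X : Matrix n n ℂ) :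
    Submodule ℂ (EuclideanSpace ℂ n) :=
  LinearMap.ker (Matrix.toEuclideanLin X)

/-- The generalized geometric mean M(A,B) = √A · √(√(A⁺) B √(A⁺)) · √A, where Ap
stands for the Moore–Penrose pseudoinverse A⁺ of A. -/
noncomputable def geoMean {n : Type*} [Fintype n] [DecidableEq n]
    (A Ap B : Matrix n n ℂ) : Matrix n n ℂ :=
  psqrt A * psqrt (psqrt Ap * B * psqrt Ap) * psqrt A

open Matrix in
/-- `Ap` is the Moore–Penrose pseudoinverse of `A` (the four Penrose conditions). -/
def IsMPInv {n : Type*} [Fintype n] [DecidableEq n] (A Ap : Matrix n n ℂ) : Prop :=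
  A * Ap * A = A ∧ Ap * A * Ap = Ap ∧ (A * Ap)ᴴ = A * Ap ∧ (Ap * A)ᴴ = Ap * A

section SqrtPort

open Matrix
open scoped MatrixOrder

variable {n : Type*} [Fintype n] [DecidableEq n]

/-- Explicit square root of a PSD matrix (replacement for the removed Mathlib one). -/
noncomputable def Matrix.PosSemidef.sqrt {X : Matrix n n ℂ} (h : X.PosSemidef) :
    Matrix n n ℂ :=
  (h.1.eigenvectorUnitary : Matrix n n ℂ) *
    Matrix.diagonal ((↑) ∘ (Real.sqrt ·) ∘ h.1.eigenvalues) *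
    (star h.1.eigenvectorUnitary : Matrix n n ℂ)

lemma Matrix.PosSemidef.sqrt_eq_cfc {X : Matrix n n ℂ} (h : X.PosSemidef) :
    h.sqrt = CFC.sqrt X := by
  rw [CFC.sqrt_eq_cfc, cfc_nnreal_eq_real _ X, h.1.cfc_eq, IsHermitian.cfc,
    Unitary.conjStarAlgAut_apply]
  unfold Matrix.PosSemidef.sqrt
  simp only [Real.sqrt.eq_1]
  rfl

lemma Matrix.PosSemidef.posSemidef_sqrt {X : Matrix n n ℂ} (h : X.PosSemidef) :
    h.sqrt.PosSemidef := by
  rw [h.sqrt_eq_cfc]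
  exact (CFC.sqrt_nonneg X).posSemidef

lemma Matrix.PosSemidef.sqrt_mul_self {X : Matrix n n ℂ} (h : X.PosSemidef) :
    h.sqrt * h.sqrt = X := by
  rw [h.sqrt_eq_cfc]
  exact CFC.sqrt_mul_sqrt_self X h.nonneg

lemma Matrix.PosSemidef.eq_sqrt_of_sq_eq {X Y : Matrix n n ℂ} (hX : X.PosSemidef)
    (hY : Y.PosSemidef) (hXY : X ^ 2 = Y) : X = hY.sqrt := by
  rw [hY.sqrt_eq_cfc]
  exact (CFC.sqrt_unique (by rw [← sq]; exact hXY) hX.nonneg).symm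

lemma Matrix.IsHermitian.star_mul_self_mul_eq_diagonal {X : Matrix n n ℂ} (h : X.IsHermitian) :
    star (h.eigenvectorUnitary : Matrix n n ℂ) * X * (h.eigenvectorUnitary : Matrix n n ℂ)
      = diagonal (RCLike.ofReal ∘ h.eigenvalues) := by
  have := h.conjStarAlgAut_star_eigenvectorUnitary
  rw [Unitary.conjStarAlgAut_apply] at this
  simpa using this

end SqrtPort

section GeoMeanAux

open Matrix

variable {n : Type*} [Fintype n] [DecidableEq n]

/-- Transfer of commutation between diagonal matrices with compatible entries. -/
lemma commute_diagonal_of_commute {Y : Matrix n n ℂ} {d e : n → ℂ}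
    (hde : ∀ i j, d i = d j → e i = e j)
    (h : Y * diagonal d = diagonal d * Y) :
    Y * diagonal e = diagonal e * Y := by
  ext i j
  have h' : (Y * diagonal d) i j = (diagonal d * Y) i j := by rw [h]
  rw [mul_diagonal, diagonal_mul] at h'
  rw [mul_diagonal, diagonal_mul]
  rcases eq_or_ne (d i) (d j) with hd | hd
  · rw [hde i j hd, mul_comm]
  · have h0 : Y i j * (d j - d i) = 0 := by
      rw [mul_sub, h', mul_comm, sub_self]
    have hY0 : Y i j = 0 := by
      rcases mul_eq_zero.mp h0 with h1 | h1
      · exact h1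
      · exact absurd (sub_eq_zero.mp h1).symm hd
    simp [hY0]

/-- Anything commuting with a PSD matrix commutes with its square root. -/
lemma commute_sqrt {A X : Matrix n n ℂ} (hA : A.PosSemidef) (h : X * A = A * X) :
    X * hA.sqrt = hA.sqrt * X := by
  set V : Matrix n n ℂ := ↑hA.1.eigenvectorUnitary with hVdef
  have hV1 : V * star V = 1 := mem_unitaryGroup_iff.mp hA.1.eigenvectorUnitary.2
  have hV2 : star V * V = 1 := mem_unitaryGroup_iff'.mp hA.1.eigenvectorUnitary.2
  have hVV : ∀ Z : Matrix n n ℂ, V * (star V * Z) = Z := fun Z => by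
    rw [← mul_assoc, hV1, one_mul]
  have hsVV : ∀ Z : Matrix n n ℂ, star V * (V * Z) = Z := fun Z => by
    rw [← mul_assoc, hV2, one_mul]
  have hdiag : star V * A * V = diagonal (RCLike.ofReal ∘ hA.1.eigenvalues) :=
    hA.1.star_mul_self_mul_eq_diagonal
  have hY : (star V * X * V) * diagonal (RCLike.ofReal ∘ hA.1.eigenvalues)
      = diagonal (RCLike.ofReal ∘ hA.1.eigenvalues) * (star V * X * V) := by
    rw [← hdiag]
    simp only [mul_assoc, hVV, hsVV]
    rw [← mul_assoc X A, h, mul_assoc]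
  have hde : ∀ i j, (RCLike.ofReal ∘ hA.1.eigenvalues : n → ℂ) i
        = (RCLike.ofReal ∘ hA.1.eigenvalues) j →
      (((↑) : ℝ → ℂ) ∘ Real.sqrt ∘ hA.1.eigenvalues) i
        = (((↑) : ℝ → ℂ) ∘ Real.sqrt ∘ hA.1.eigenvalues) j := by
    intro i j hij
    simp only [Function.comp_apply] at hij ⊢
    norm_cast at hij ⊢
    rw [hij]
  have hY2 := commute_diagonal_of_commute hde hY
  show X * (V * diagonal (((↑) : ℝ → ℂ) ∘ Real.sqrt ∘ hA.1.eigenvalues) * star V)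
      = (V * diagonal (((↑) : ℝ → ℂ) ∘ Real.sqrt ∘ hA.1.eigenvalues) * star V) * X
  have h2 := congrArg (fun M => V * M * star V) hY2
  simp only [mul_assoc, hVV, hsVV, hV1, mul_one] at h2 ⊢
  exact h2

/-- Uniqueness of the Moore–Penrose inverse. -/
lemma mp_unique {A X Y : Matrix n n ℂ} (hX : IsMPInv A X) (hY : IsMPInv A Y) : X = Y := by
  obtain ⟨hX1, hX2, hX3, hX4⟩ := hX
  obtain ⟨hY1, hY2, hY3, hY4⟩ := hY
  have hAXY : A * X = A * Y := by
    calc A * X = (A * X)ᴴ := hX3.symm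
      _ = Xᴴ * Aᴴ := by rw [conjTranspose_mul]
      _ = Xᴴ * (A * Y * A)ᴴ := by rw [hY1]
      _ = Xᴴ * (Aᴴ * (A * Y)ᴴ) := by rw [conjTranspose_mul (A * Y) A]
      _ = (Xᴴ * Aᴴ) * (A * Y)ᴴ := by rw [mul_assoc]
      _ = (A * X)ᴴ * (A * Y)ᴴ := by rw [← conjTranspose_mul A X]
      _ = (A * X) * (A * Y) := by rw [hX3, hY3]
      _ = (A * X * A) * Y := by simp only [mul_assoc]
      _ = A * Y := by rw [hX1]
  have hXYA : X * A = Y * A := by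
    calc X * A = (X * A)ᴴ := hX4.symm
      _ = Aᴴ * Xᴴ := by rw [conjTranspose_mul]
      _ = (A * (Y * A))ᴴ * Xᴴ := by rw [← mul_assoc, hY1]
      _ = ((Y * A)ᴴ * Aᴴ) * Xᴴ := by rw [conjTranspose_mul]
      _ = (Y * A)ᴴ * (Aᴴ * Xᴴ) := by rw [mul_assoc]
      _ = (Y * A)ᴴ * (X * A)ᴴ := by rw [← conjTranspose_mul X A]
      _ = (Y * A) * (X * A) := by rw [hX4, hY4]
      _ = Y * (A * X * A) := by simp only [mul_assoc]
      _ = Y * A := by rw [hX1]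
  calc X = X * A * X := hX2.symm
    _ = X * (A * Y) := by rw [mul_assoc, hAXY]
    _ = (X * A) * Y := by rw [mul_assoc]
    _ = (Y * A) * Y := by rw [hXYA]
    _ = Y := hY2

lemma toEuclideanLin_mul' (M N : Matrix n n ℂ) :
    Matrix.toEuclideanLin (M * N)
      = (Matrix.toEuclideanLin M).comp (Matrix.toEuclideanLin N) := by
  apply LinearMap.ext
  intro v
  simp [Matrix.toEuclideanLin_apply, ← Matrix.mulVec_mulVec]

/-- For a Hermitian matrix, the kernel is the orthogonal complement of the range. -/
lemma herm_ker_eq_orth_range {P : Matrix n n ℂ} (hP : P.IsHermitian) :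
    LinearMap.ker (Matrix.toEuclideanLin P)
      = (LinearMap.range (Matrix.toEuclideanLin P))ᗮ := by
  have hsym := Matrix.isHermitian_iff_isSymmetric.mp hP
  ext x
  simp only [LinearMap.mem_ker, Submodule.mem_orthogonal]
  constructor
  · rintro h u ⟨v, rfl⟩
    rw [hsym v x, h, inner_zero_right]
  · intro h
    have h0 := h (Matrix.toEuclideanLin P (Matrix.toEuclideanLin P x)) ⟨_, rfl⟩
    rw [hsym] at h0
    exact inner_self_eq_zero.mp h0

/-- Hermitian idempotents with equal ranges are equal. -/
lemma proj_unique {P Q : Matrix n n ℂ} (hP : P.IsHermitian) (hPi : P * P = P)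
    (hQ : Q.IsHermitian) (hQi : Q * Q = Q)
    (hrange : LinearMap.range (Matrix.toEuclideanLin P)
      = LinearMap.range (Matrix.toEuclideanLin Q)) : P = Q := by
  have key : ∀ (R S : Matrix n n ℂ), S * S = S →
      LinearMap.range (Matrix.toEuclideanLin R) ≤ LinearMap.range (Matrix.toEuclideanLin S) →
      S * R = R := by
    intro R S hS hle
    apply Matrix.toEuclideanLin.injective
    apply LinearMap.ext
    intro x
    rw [toEuclideanLin_mul', LinearMap.comp_apply]
    obtain ⟨y, hy⟩ := hle ⟨x, rfl⟩
    rw [← hy, ← LinearMap.comp_apply, ← toEuclideanLin_mul', hS]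
  have h1 : Q * P = P := key P Q hQi (le_of_eq hrange)
  have h2 : P * Q = Q := key Q P hPi (le_of_eq hrange.symm)
  have h3 : Pᴴ = (Q * P)ᴴ := congrArg conjTranspose h1.symm
  rw [conjTranspose_mul, hP.eq, hQ.eq] at h3
  rw [h3, h2]

omit [DecidableEq n] in
/-- Quadratic form conjugation identity. -/
lemma quad_eq {S : Matrix n n ℂ} (hS : Sᴴ = S) (Q : Matrix n n ℂ) (v : n → ℂ) :
    star v ⬝ᵥ (S * Q * S) *ᵥ v = star (S *ᵥ v) ⬝ᵥ Q *ᵥ (S *ᵥ v) := by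
  have hstar : star v ᵥ* S = star (S *ᵥ v) := by rw [star_mulVec, hS]
  rw [← Matrix.mulVec_mulVec, ← Matrix.mulVec_mulVec, Matrix.dotProduct_mulVec, hstar]

/-- For PSD `X`, `√X v = 0 ↔ X v = 0`. -/
lemma sqrt_mulVec_zero_iff {X : Matrix n n ℂ} (hX : X.PosSemidef) (w : n → ℂ) :
    hX.sqrt *ᵥ w = 0 ↔ X *ᵥ w = 0 := by
  constructor
  · intro h
    rw [← hX.sqrt_mul_self, ← Matrix.mulVec_mulVec, h, Matrix.mulVec_zero]
  · intro h
    have h0 : star w ⬝ᵥ X *ᵥ w = 0 := by rw [h, dotProduct_zero]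
    have hstar : star w ᵥ* hX.sqrt = star (hX.sqrt *ᵥ w) := by
      rw [star_mulVec, hX.posSemidef_sqrt.1.eq]
    have hX2 : X *ᵥ w = hX.sqrt *ᵥ (hX.sqrt *ᵥ w) := by
      rw [Matrix.mulVec_mulVec, hX.sqrt_mul_self]
    rw [hX2, Matrix.dotProduct_mulVec, hstar] at h0
    exact dotProduct_star_self_eq_zero.mp h0

end GeoMeanAux

/-- The kernel of the generalized geometric mean M(A,B) equals the kernel of
Π_A Π_B Π_A, where Π_A, Π_B are the projections onto the supports of A and B. -/
theorem ker_geoMean_eq_ker_proj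
    {n : Type*} [Fintype n] [DecidableEq n]
    (A B Ap PiA PiB : Matrix n n ℂ) (hA : A.PosSemidef) (hB : B.PosSemidef)
    (hAp : IsMPInv A Ap)
    (hAherm : PiA.IsHermitian) (hAidem : PiA * PiA = PiA)
    (hArange : LinearMap.range (Matrix.toEuclideanLin PiA) = msupp A)
    (hBherm : PiB.IsHermitian) (hBidem : PiB * PiB = PiB)
    (hBrange : LinearMap.range (Matrix.toEuclideanLin PiB) = msupp B) :
    mker (geoMean A Ap B) = mker (PiA * PiB * PiA) := by
  open Matrix in
  -- Basic facts about `Ap`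
  obtain ⟨hp1, hp2, hp3, hp4⟩ := hAp
  have hApH : Apᴴ = Ap := by
    refine mp_unique (A := A) ?_ ⟨hp1, hp2, hp3, hp4⟩
    have hAh : Aᴴ = A := hA.1.eq
    refine ⟨?_, ?_, ?_, ?_⟩
    · calc A * Apᴴ * A = (Aᴴ * Ap * Aᴴ)ᴴ := by
            simp [conjTranspose_mul, mul_assoc]
        _ = (A * Ap * A)ᴴ := by rw [hAh]
        _ = Aᴴ := by rw [hp1]
        _ = A := hAh
    · calc Apᴴ * A * Apᴴ = Apᴴ * Aᴴ * Apᴴ := by rw [hAh]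
        _ = (Ap * A * Ap)ᴴ := by simp [conjTranspose_mul, mul_assoc]
        _ = Apᴴ := by rw [hp2]
    · calc (A * Apᴴ)ᴴ = Ap * Aᴴ := by simp [conjTranspose_mul]
        _ = Ap * A := by rw [hAh]
        _ = (Ap * A)ᴴ := hp4.symm
        _ = Aᴴ * Apᴴ := by rw [conjTranspose_mul]
        _ = A * Apᴴ := by rw [hAh]
    · calc (Apᴴ * A)ᴴ = Aᴴ * Ap := by simp [conjTranspose_mul]
        _ = A * Ap := by rw [hAh]
        _ = (A * Ap)ᴴ := hp3.symm
        _ = Apᴴ * Aᴴ := by rw [conjTranspose_mul]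
        _ = Apᴴ * A := by rw [hAh]
  have hApPSD : Ap.PosSemidef := by
    have h0 := hA.conjTranspose_mul_mul_same Ap
    rwa [hApH, hp2] at h0
  have hComm : Ap * A = A * Ap := by
    calc Ap * A = (Ap * A)ᴴ := hp4.symm
      _ = Aᴴ * Apᴴ := by rw [conjTranspose_mul]
      _ = A * Ap := by rw [hA.1.eq, hApH]
  -- PiA equals A * Ap
  have hrangeA : LinearMap.range (Matrix.toEuclideanLin A) = msupp A := by
    rw [msupp, herm_ker_eq_orth_range hA.1, Submodule.orthogonal_orthogonal]
  have hAApherm : (A * Ap).IsHermitian := hp3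
  have hAApidem : (A * Ap) * (A * Ap) = A * Ap := by
    calc (A * Ap) * (A * Ap) = (A * Ap * A) * Ap := by simp only [mul_assoc]
      _ = A * Ap := by rw [hp1]
  have hrangeAAp : LinearMap.range (Matrix.toEuclideanLin (A * Ap))
      = LinearMap.range (Matrix.toEuclideanLin A) := by
    apply le_antisymm
    · rw [toEuclideanLin_mul']
      exact LinearMap.range_comp_le_range _ _
    · conv_lhs => rw [← hp1]
      rw [toEuclideanLin_mul']
      exact LinearMap.range_comp_le_range _ _
  have hPiAeq : PiA = A * Ap :=
    proj_unique hAherm hAidem hAApherm hAApidem (by rw [hrangeAAp, hrangeA, hArange])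
  -- square roots
  set S := hA.sqrt with hSdef
  set T := hApPSD.sqrt with hTdef
  have hSH : Sᴴ = S := hA.posSemidef_sqrt.1.eq
  have hTH : Tᴴ = T := hApPSD.posSemidef_sqrt.1.eq
  have hcomm1 : Ap * S = S * Ap := commute_sqrt hA hComm
  have hcomm2 : S * T = T * S := commute_sqrt hApPSD hcomm1.symm
  have hT : T.PosSemidef := hApPSD.posSemidef_sqrt
  have hcomm3 : S * hT.sqrt = hT.sqrt * S := commute_sqrt hT hcomm2
  have hTSPSD : (T * S).PosSemidef := by
    have h0 := hA.posSemidef_sqrt.conjTranspose_mul_mul_same hT.sqrt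
    have he : hT.sqrtᴴ * S * hT.sqrt = T * S := by
      rw [hT.posSemidef_sqrt.1.eq, mul_assoc, hcomm3, ← mul_assoc, hT.sqrt_mul_self]
    rwa [he] at h0
  have hPiAPSD : PiA.PosSemidef := by
    have h0 := posSemidef_conjTranspose_mul_self PiA
    rwa [hAherm.eq, hAidem] at h0
  have hTSsq : (T * S) ^ 2 = PiA := by
    rw [pow_two]
    calc (T * S) * (T * S) = T * (S * T) * S := by simp only [mul_assoc]
      _ = T * (T * S) * S := by rw [hcomm2]
      _ = (T * T) * (S * S) := by simp only [mul_assoc]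
      _ = Ap * A := by rw [hApPSD.sqrt_mul_self, hA.sqrt_mul_self]
      _ = PiA := by rw [hComm, ← hPiAeq]
  have hTSeq : T * S = PiA := by
    have h1 : T * S = hPiAPSD.sqrt := hTSPSD.eq_sqrt_of_sq_eq hPiAPSD hTSsq
    have h2 : PiA = hPiAPSD.sqrt :=
      hPiAPSD.eq_sqrt_of_sq_eq hPiAPSD (by rw [pow_two, hAidem])
    rw [h1, ← h2]
  -- the inner matrix C = T * B * T
  have hC : (T * B * T).PosSemidef := by
    have h0 := hB.conjTranspose_mul_mul_same T
    rwa [hTH] at h0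
  have hsqrtC : (hC.sqrt).PosSemidef := hC.posSemidef_sqrt
  have hgeo : geoMean A Ap B = S * hC.sqrt * S := by
    rw [geoMean, show psqrt A = S from dif_pos hA, show psqrt Ap = T from dif_pos hApPSD,
      show psqrt (T * B * T) = hC.sqrt from dif_pos hC]
  have hM : (geoMean A Ap B).PosSemidef := by
    rw [hgeo]
    have h0 := hsqrtC.conjTranspose_mul_mul_same S
    rwa [hSH] at h0
  have hPiBPSD : PiB.PosSemidef := by
    have h0 := posSemidef_conjTranspose_mul_self PiB
    rwa [hBherm.eq, hBidem] at h0
  have hPPP : (PiA * PiB * PiA).PosSemidef := by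
    have h0 := hPiBPSD.conjTranspose_mul_mul_same PiA
    rwa [hAherm.eq] at h0
  -- kernels of B and PiB agree
  have hmemker : ∀ (X : Matrix n n ℂ) (v : n → ℂ),
      X *ᵥ v = 0 ↔ (WithLp.equiv 2 (n → ℂ)).symm v ∈ LinearMap.ker (Matrix.toEuclideanLin X) := by
    intro X v
    rw [LinearMap.mem_ker, WithLp.equiv_symm_apply, Matrix.toEuclideanLin_apply_piLp_toLp]
    constructor
    · intro h; rw [h]; simp
    · intro h; simpa using congrArg (WithLp.equiv 2 (n → ℂ)) h
  have hkerB : ∀ v : n → ℂ, PiB *ᵥ v = 0 ↔ B *ᵥ v = 0 := by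
    have hker : LinearMap.ker (Matrix.toEuclideanLin PiB)
        = LinearMap.ker (Matrix.toEuclideanLin B) := by
      rw [herm_ker_eq_orth_range hBherm, hBrange, msupp, Submodule.orthogonal_orthogonal]
    intro v
    rw [hmemker PiB v, hmemker B v, hker]
  -- main pointwise equivalence
  have key : ∀ v : n → ℂ, (geoMean A Ap B) *ᵥ v = 0 ↔ (PiA * PiB * PiA) *ᵥ v = 0 := by
    intro v
    rw [← hM.dotProduct_mulVec_zero_iff, ← hPPP.dotProduct_mulVec_zero_iff,
      hgeo, quad_eq hSH hC.sqrt v, quad_eq hAherm.eq PiB v,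
      hsqrtC.dotProduct_mulVec_zero_iff, sqrt_mulVec_zero_iff hC,
      ← hC.dotProduct_mulVec_zero_iff, quad_eq hTH B (S *ᵥ v),
      Matrix.mulVec_mulVec, hTSeq,
      hB.dotProduct_mulVec_zero_iff, hPiBPSD.dotProduct_mulVec_zero_iff, hkerB]
  -- conclude
  ext x
  rw [mker, mker, LinearMap.mem_ker, LinearMap.mem_ker]
  have hx := key ((WithLp.equiv 2 (n → ℂ)) x)
  rw [hmemker, hmemker] at hx
  simpa using hx
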